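/- Let T be a κ-strict pseudo-contraction with a fixed point p, and (xₙ) the Mann iteration with λₙ ∈ (κ,1) satisfying ∑ (λₙ-κ)(1-λₙ) = ∞. Then lim_{n→∞} ‖xₙ - Txₙ‖ = 0. -/

import Mathlib

open RealInnerProductSpace in
theorem stmt_13 {H : Type*} [NormedAddCommGroup H] [InnerProductSpace ℝ H]
    (C : Set H) (hCne : C.Nonempty) (hCconv : Convex ℝ C)
    (κ : ℝ) (hκ0 : 0 ≤ κ) (hκ1 : κ < 1)
    (T : H → H) (hTmap : Set.MapsTo T C C)
    (hT : ∀ u ∈ C, ∀ v ∈ C,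
      ‖T u - T v‖ ^ 2 ≤ ‖u - v‖ ^ 2 + κ * ‖(u - T u) - (v - T v)‖ ^ 2)
    (p : H) (hp : p ∈ C) (hfix : T p = p)
    (lam : ℕ → ℝ) (hlam : ∀ n, lam n ∈ Set.Ioo κ 1)
    (hdiv : Filter.Tendsto
      (fun N : ℕ => ∑ n ∈ Finset.range N, (lam n - κ) * (1 - lam n))
      Filter.atTop Filter.atTop)
    (x : ℕ → H) (hx0 : x 0 ∈ C)
    (hxrec : ∀ n, x (n + 1) = lam n • x n + (1 - lam n) • T (x n)) :
    Filter.Tendsto (fun n => ‖x n - T (x n)‖) Filter.atTop (nhds 0) := by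
  -- membership of iterates
  have hmemC : ∀ n, x n ∈ C := by
    intro n
    induction n with
    | zero => exact hx0
    | succ n ih =>
      rw [hxrec]
      exact hCconv ih (hTmap ih) (le_of_lt (lt_of_le_of_lt hκ0 (hlam n).1))
        (by linarith [(hlam n).2]) (by ring)
  -- convexity identity
  have key : ∀ (l : ℝ) (a b : H), ‖l•a + (1-l)•b‖^2
      = l*‖a‖^2 + (1-l)*‖b‖^2 - l*(1-l)*‖a-b‖^2 := by
    intro l a b
    have h1 := norm_add_sq_real (l•a) ((1-l)•b)
    have h2 := norm_sub_sq_real a b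
    rw [norm_smul, norm_smul, real_inner_smul_left, real_inner_smul_right,
      mul_pow, mul_pow, Real.norm_eq_abs, Real.norm_eq_abs, sq_abs, sq_abs] at h1
    nlinarith [h1, h2]
  -- monotonicity of I - T (strict pseudocontraction inequality)
  have hmono : ∀ u ∈ C, ∀ v ∈ C,
      (1-κ) * ‖(u - T u) - (v - T v)‖^2 ≤ 2 * ⟪u - v, (u - T u) - (v - T v)⟫ := by
    intro u hu v hv
    have h1 := hT u hu v hv
    have h2 : T u - T v = (u - v) - ((u - T u) - (v - T v)) := by abel
    rw [h2, norm_sub_sq_real] at h1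
    nlinarith [h1]
  set e : ℕ → ℝ := fun n => ‖x n - T (x n)‖^2 with he
  set c : ℕ → ℝ := fun n => (lam n - κ) * (1 - lam n) with hc
  -- descent inequality
  have descent : ∀ n, e (n+1) ≤ e n ∧
      ‖x (n+1) - p‖^2 ≤ ‖x n - p‖^2 - c n * e n := by
    intro n
    obtain ⟨hl1, hl2⟩ := hlam n
    constructor
    · -- e nonincreasing
      set A0 := x n - T (x n) with hA0
      set Δ := (x (n+1) - T (x (n+1))) - A0 with hΔ
      have hd : x (n+1) - x n = -((1 - lam n)•A0) := by rw [hxrec]; module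
      have h1 := hmono (x (n+1)) (hmemC (n+1)) (x n) (hmemC n)
      rw [show x (n+1) - T (x (n+1)) - (x n - T (x n)) = Δ from by rw [hΔ, hA0],
        hd, inner_neg_left, real_inner_smul_left] at h1
      have h2 : x (n+1) - T (x (n+1)) = A0 + Δ := by rw [hΔ]; abel
      show ‖x (n+1) - T (x (n+1))‖^2 ≤ ‖A0‖^2
      rw [h2, norm_add_sq_real]
      nlinarith [h1, sq_nonneg ‖Δ‖, hl1, hl2, hκ1]
    · -- descent
      have hab : x (n+1) - p = lam n • (x n - p) + (1 - lam n) • (T (x n) - p) := by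
        rw [hxrec]; module
      have hb : ‖T (x n) - p‖^2 ≤ ‖x n - p‖^2 + κ * ‖x n - T (x n)‖^2 := by
        have := hT (x n) (hmemC n) p hp
        rw [hfix] at this
        simpa using this
      have hsub : (x n - p) - (T (x n) - p) = x n - T (x n) := by abel
      rw [hab, key, hsub]
      simp only [hc, he]
      nlinarith [hb, sq_nonneg ‖x n - T (x n)‖, hl1, hl2]
  have eanti : Antitone e := antitone_nat_of_succ_le fun n => (descent n).1
  have hcpos : ∀ n, 0 < c n := fun n => mul_pos (by linarith [(hlam n).1]) (by linarith [(hlam n).2])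
  set B := ‖x 0 - p‖^2 with hB
  -- partial sum bound
  have sumbound : ∀ N, ∑ n ∈ Finset.range N, c n * e n ≤ B := by
    intro N
    have h1 : ∑ n ∈ Finset.range N, c n * e n
        ≤ ∑ n ∈ Finset.range N, (‖x n - p‖^2 - ‖x (n+1) - p‖^2) := by
      apply Finset.sum_le_sum
      intro n _
      linarith [(descent n).2]
    rw [Finset.sum_range_sub' (fun n => ‖x n - p‖^2)] at h1
    have := sq_nonneg ‖x N - p‖
    calc ∑ n ∈ Finset.range N, c n * e n ≤ B - ‖x N - p‖^2 := h1
      _ ≤ B := by linarith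
  set S : ℕ → ℝ := fun N => ∑ n ∈ Finset.range N, c n with hS
  have hSe : ∀ N, e N * S N ≤ B := by
    intro N
    have h1 : e N * S N = ∑ n ∈ Finset.range N, c n * e N := by
      rw [← Finset.sum_mul]; ring
    rw [h1]
    refine le_trans (Finset.sum_le_sum fun n hn => ?_) (sumbound N)
    exact mul_le_mul_of_nonneg_left
      (eanti (le_of_lt (Finset.mem_range.mp hn))) (le_of_lt (hcpos n))
  -- e tends to 0
  have heto : Filter.Tendsto e Filter.atTop (nhds 0) := by
    have hinv : Filter.Tendsto (fun N => B * (S N)⁻¹) Filter.atTop (nhds 0) := by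
      have := hdiv.inv_tendsto_atTop
      have h := this.const_mul B
      simpa using h
    apply squeeze_zero' (Filter.Eventually.of_forall fun n => sq_nonneg _) _ hinv
    filter_upwards [hdiv.eventually_gt_atTop 0] with N hN
    show e N ≤ B * (S N)⁻¹
    have h2 : e N ≤ B / S N := (le_div_iff₀ hN).mpr (hSe N)
    simpa [div_eq_mul_inv] using h2
  have : Filter.Tendsto (fun n => Real.sqrt (e n)) Filter.atTop (nhds 0) := by
    have := (Real.continuous_sqrt.tendsto 0).comp heto
    simpa [Function.comp_def] using this
  refine this.congr fun n => ?_
  exact Real.sqrt_sq (norm_nonneg _)
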